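/- Identifiability of nonlinear pre-additive noise models: Suppose g, g' : ℝ → ℝ are strictly monotone and twice differentiable, h, h' : [0,1] → ℝ are differentiable and strictly monotone with h(1/2) = h'(1/2) = 0, β, β' ∈ ℝ, and g(x + h(ε)) + βx = g'(x + h'(ε)) + β'x for all x in an open set X ⊆ ℝ and all ε ∈ [0,1]. If g'' ≠ 0 almost everywhere, then β = β', h = h' on [0,1], and g(x + h(ε)) = g'(x + h(ε)) for all x ∈ X and ε ∈ [0,1]. -/

import Mathlib

open Set MeasureTheory

/-- identifiability of nonlinear pre-additive noise models. If the strictly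
monotone, twice differentiable `g, g'`, the differentiable strictly monotone noise
quantile functions `h, h'` with `h(1/2) = h'(1/2) = 0` and scalars `β, β'` satisfy
`g (x + h ε) + β x = g' (x + h' ε) + β' x` on an open set `X` and all `ε ∈ [0,1]`, and
`g'' ≠ 0` almost everywhere, then `β = β'`, `h = h'` on `[0,1]`, and
`g (x + h ε) = g' (x + h ε)` for all `x ∈ X`, `ε ∈ [0,1]`. -/
theorem preANM_identifiability_nonlinear
    (g g' h h' : ℝ → ℝ) (β β' : ℝ) (X : Set ℝ)
    (hXopen : IsOpen X) (hXne : X.Nonempty)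
    (hgmono : StrictMono g) (hg'mono : StrictMono g')
    (hg2 : ContDiff ℝ 2 g) (hg'2 : ContDiff ℝ 2 g')
    (hhmono : StrictMonoOn h (Icc 0 1)) (hh'mono : StrictMonoOn h' (Icc 0 1))
    (hhdiff : ∀ ε ∈ Icc (0:ℝ) 1, DifferentiableAt ℝ h ε)
    (hh'diff : ∀ ε ∈ Icc (0:ℝ) 1, DifferentiableAt ℝ h' ε)
    (hh0 : h (1/2) = 0) (hh'0 : h' (1/2) = 0)
    (hreach : ∀ x ∈ X, ∃ ε₀ ∈ Icc (0:ℝ) 1, ε₀ ≠ 1/2 ∧ x + h ε₀ ∈ X)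
    (heq : ∀ x ∈ X, ∀ ε ∈ Icc (0:ℝ) 1,
      g (x + h ε) + β * x = g' (x + h' ε) + β' * x)
    (hnonlin : ∀ᵐ x ∂volume, deriv (deriv g) x ≠ 0) :
    β = β' ∧ (∀ ε ∈ Icc (0:ℝ) 1, h ε = h' ε) ∧
      (∀ x ∈ X, ∀ ε ∈ Icc (0:ℝ) 1, g (x + h ε) = g' (x + h ε)) := by
  obtain ⟨x₀, hx₀⟩ := hXne
  obtain ⟨r, hr, hball⟩ := Metric.isOpen_iff.mp hXopen x₀ hx₀
  have hmemX : ∀ y : ℝ, |y - x₀| < r → y ∈ X := by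
    intro y hy
    exact hball (by simpa [Metric.mem_ball, Real.dist_eq] using hy)
  have hhalf : (1/2 : ℝ) ∈ Icc (0:ℝ) 1 := by norm_num
  -- Basic consequence of the functional equation, recentered
  have K1 : ∀ ε ∈ Icc (0:ℝ) 1, ∀ t : ℝ, t - h' ε ∈ X →
      g (t + (h ε - h' ε)) = g' t + (β' - β) * (t - h' ε) := by
    intro ε hε t ht
    have H := heq (t - h' ε) ht ε hε
    have e1 : t - h' ε + h ε = t + (h ε - h' ε) := by ring
    have e2 : t - h' ε + h' ε = t := by ring
    rw [e1, e2] at H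
    linear_combination H
  have K2 : ∀ t ∈ X, g t - g' t = (β' - β) * t := by
    intro t ht
    have H := heq t ht (1/2) hhalf
    rw [hh0, hh'0, add_zero] at H
    linear_combination H
  have hgd : Differentiable ℝ g := hg2.differentiable two_ne_zero
  have hhc : ContinuousOn h (Icc 0 1) := fun ε hε => (hhdiff ε hε).continuousAt.continuousWithinAt
  have hh'c : ContinuousOn h' (Icc 0 1) := fun ε hε => (hh'diff ε hε).continuousAt.continuousWithinAt
  have hcc : ContinuousOn (fun ε => h ε - h' ε) (Icc 0 1) := hhc.sub hh'c
  -- uniform continuity of h' on [0,1]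
  obtain ⟨δ, hδ, hδu⟩ : ∃ δ > 0, ∀ s ∈ Icc (0:ℝ) 1, ∀ s' ∈ Icc (0:ℝ) 1,
      |s - s'| < δ → |h' s - h' s'| < r/2 := by
    have hu := isCompact_Icc.uniformContinuousOn_of_continuous hh'c
    rw [Metric.uniformContinuousOn_iff] at hu
    obtain ⟨δ, hδ, H⟩ := hu (r/2) (by linarith)
    refine ⟨δ, hδ, fun s hs s' hs' hss => ?_⟩
    have := H s hs s' hs' (by simpa [Real.dist_eq] using hss)
    simpa [Real.dist_eq] using this
  -- Step C : h - h' is locally constant on [0,1]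
  have stepC : ∀ ε ∈ Icc (0:ℝ) 1, ∀ s ∈ Icc (0:ℝ) 1, |s - ε| < δ →
      h s - h' s = h ε - h' ε := by
    intro ε hε s hs hsε
    by_contra hne
    set t₂ : ℝ := x₀ + h' ε with ht₂
    -- key equality from IVT on the parameter interval
    have KE : ∀ u ∈ uIcc (h s - h' s) (h ε - h' ε), ∀ t : ℝ, |t - t₂| < r/2 →
        g (t + u) - g (t₂ + u) = g (t + (h ε - h' ε)) - g (t₂ + (h ε - h' ε)) := by
      intro u hu t ht
      have hsub : uIcc s ε ⊆ Icc (0:ℝ) 1 := by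
        intro z hz
        rw [mem_uIcc] at hz
        rcases hz with ⟨h1, h2⟩ | ⟨h1, h2⟩ <;>
          exact ⟨by linarith [hs.1, hε.1], by linarith [hs.2, hε.2]⟩
      obtain ⟨s', hs'mem, hcs'⟩ := intermediate_value_uIcc (hcc.mono hsub) hu
      have hs'01 : s' ∈ Icc (0:ℝ) 1 := hsub hs'mem
      have hs'ε : |s' - ε| < δ := by
        rw [mem_uIcc] at hs'mem
        rw [abs_lt]; rw [abs_lt] at hsε
        rcases hs'mem with ⟨h1, h2⟩ | ⟨h1, h2⟩ <;> constructor <;> linarith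
      have hws' : |h' s' - h' ε| < r/2 := hδu s' hs'01 ε hε hs'ε
      have hin1 : ∀ t' : ℝ, |t' - t₂| < r/2 → t' - h' s' ∈ X := by
        intro t' ht'
        apply hmemX
        have e : t' - h' s' - x₀ = (t' - t₂) + (h' ε - h' s') := by rw [ht₂]; ring
        rw [e]
        have hb1 := abs_add_le (t' - t₂) (h' ε - h' s')
        have hb2 : |h' ε - h' s'| < r/2 := by rw [abs_sub_comm]; exact hws'
        linarith
      have hin2 : ∀ t' : ℝ, |t' - t₂| < r/2 → t' - h' ε ∈ X := by
        intro t' ht'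
        apply hmemX
        have e : t' - h' ε - x₀ = t' - t₂ := by rw [ht₂]; ring
        rw [e]; linarith
      have ht₂self : |t₂ - t₂| < r/2 := by rw [sub_self, abs_zero]; linarith
      have E1 := K1 s' hs'01 t (hin1 t ht)
      have E2 := K1 ε hε t (hin2 t ht)
      have E3 := K1 s' hs'01 t₂ (hin1 t₂ ht₂self)
      have E4 := K1 ε hε t₂ (hin2 t₂ ht₂self)
      have hcs'' : h s' - h' s' = u := hcs'
      rw [hcs''] at E1 E3
      linear_combination E1 - E2 - E3 + E4
    -- midpoint
    set u₀ : ℝ := ((h s - h' s) + (h ε - h' ε))/2 with hu₀def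
    have hu₀ : min (h s - h' s) (h ε - h' ε) < u₀ ∧ u₀ < max (h s - h' s) (h ε - h' ε) := by
      rcases lt_or_gt_of_ne hne with hlt | hlt <;>
        constructor <;> simp only [min_def, max_def, hu₀def] <;> split_ifs <;> linarith
    have hIoo_sub : Ioo (min (h s - h' s) (h ε - h' ε)) (max (h s - h' s) (h ε - h' ε)) ⊆ uIcc (h s - h' s) (h ε - h' ε) := by
      intro u hu
      rcases le_total (h s - h' s) (h ε - h' ε) with hle | hle
      · have h1 := hu.1; have h2 := hu.2
        rw [min_eq_left hle] at h1; rw [max_eq_right hle] at h2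
        exact mem_uIcc.mpr (Or.inl ⟨h1.le, h2.le⟩)
      · have h1 := hu.1; have h2 := hu.2
        rw [min_eq_right hle] at h1; rw [max_eq_left hle] at h2
        exact mem_uIcc.mpr (Or.inr ⟨h1.le, h2.le⟩)
    have derivEq : ∀ t : ℝ, |t - t₂| < r/2 → deriv g (t + u₀) = deriv g (t₂ + u₀) := by
      intro t ht
      have hev : (fun u => g (t + u) - g (t₂ + u)) =ᶠ[nhds u₀]
          fun _ => g (t + (h ε - h' ε)) - g (t₂ + (h ε - h' ε)) := by
        filter_upwards [Ioo_mem_nhds hu₀.1 hu₀.2] with u hu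
        exact KE u (hIoo_sub hu) t ht
      have hD := hev.deriv_eq
      rw [deriv_const] at hD
      have d1 : DifferentiableAt ℝ (fun u => g (t + u)) u₀ :=
        (hgd (t + u₀)).comp u₀ (differentiableAt_id.const_add t)
      have d2 : DifferentiableAt ℝ (fun u => g (t₂ + u)) u₀ :=
        (hgd (t₂ + u₀)).comp u₀ (differentiableAt_id.const_add t₂)
      rw [deriv_fun_sub d1 d2, deriv_comp_const_add, deriv_comp_const_add] at hD
      linarith
    -- second derivative of g vanishes on an interval
    have h2z : ∀ y ∈ Ioo (t₂ + u₀ - r/2) (t₂ + u₀ + r/2), deriv (deriv g) y = 0 := by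
      intro y hy
      have hev : deriv g =ᶠ[nhds y] fun _ => deriv g (t₂ + u₀) := by
        filter_upwards [Ioo_mem_nhds hy.1 hy.2] with z hz
        have hz' : |(z - u₀) - t₂| < r/2 := by
          rw [abs_lt]; constructor <;> [linarith [hz.1]; linarith [hz.2]]
        have := derivEq (z - u₀) hz'
        simpa using this
      rw [hev.deriv_eq, deriv_const]
    have hsub2 : Ioo (t₂ + u₀ - r/2) (t₂ + u₀ + r/2) ⊆ {y | ¬ deriv (deriv g) y ≠ 0} := by
      intro y hy
      simp only [mem_setOf_eq, not_not]
      exact h2z y hy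
    have hm := measure_mono (μ := volume) hsub2
    rw [ae_iff] at hnonlin
    rw [hnonlin, Real.volume_Ioo] at hm
    have hzero : ENNReal.ofReal ((t₂ + u₀ + r/2) - (t₂ + u₀ - r/2)) = 0 :=
      le_antisymm hm zero_le
    rw [ENNReal.ofReal_eq_zero] at hzero
    linarith
  -- Step D : h = h' on [0,1] by chaining
  have hc12 : h (1/2) - h' (1/2) = 0 := by rw [hh0, hh'0]; ring
  have chain : ∀ n : ℕ, ∀ ε ∈ Icc (0:ℝ) 1, |ε - 1/2| ≤ n * (δ/2) → h ε - h' ε = 0 := by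
    intro n
    induction n with
    | zero =>
      intro ε hε hb
      have h0 : |ε - 1/2| = 0 := le_antisymm (by simpa using hb) (abs_nonneg _)
      have : ε = 1/2 := by
        have := abs_eq_zero.mp h0; linarith
      rw [this]; exact hc12
    | succ n ih =>
      intro ε hε hb
      rcases le_or_gt (|ε - 1/2|) (n * (δ/2)) with hle | hgt
      · exact ih ε hε hle
      · push_cast at hb
        rcases le_total (1/2 : ℝ) ε with hge | hge
        · have habs : ε - 1/2 ≤ (n + 1) * (δ/2) := by
            rw [abs_of_nonneg (by linarith)] at hb; exact hb
          set ε' : ℝ := max (1/2) (ε - δ/2) with hε'def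
          have hε'1 : (1/2:ℝ) ≤ ε' := le_max_left _ _
          have hε'2 : ε' ≤ ε := max_le (by linarith) (by linarith)
          have hε'01 : ε' ∈ Icc (0:ℝ) 1 := ⟨by linarith, by linarith [hε.2]⟩
          have hε'3 : ε - δ/2 ≤ ε' := le_max_right _ _
          have hstep : |ε - ε'| < δ := by
            rw [abs_lt]; constructor <;> linarith
          have hb' : |ε' - 1/2| ≤ n * (δ/2) := by
            rw [abs_of_nonneg (by linarith)]
            have h0 : (0:ℝ) ≤ (n:ℝ) * (δ/2) := by positivity
            have h1 : (1/2:ℝ) ≤ 1/2 + n * (δ/2) := by linarith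
            have h2 : ε - δ/2 ≤ 1/2 + n * (δ/2) := by linarith
            have h4 := max_le h1 h2
            rw [← hε'def] at h4
            linarith
          have hcc' := stepC ε' hε'01 ε hε hstep
          rw [hcc']
          exact ih ε' hε'01 hb'
        · have habs : (1/2) - ε ≤ (n + 1) * (δ/2) := by
            rw [abs_of_nonpos (by linarith)] at hb; linarith
          set ε' : ℝ := min (1/2) (ε + δ/2) with hε'def
          have hε'1 : ε' ≤ (1/2:ℝ) := min_le_left _ _
          have hε'2 : ε ≤ ε' := le_min (by linarith) (by linarith)
          have hε'01 : ε' ∈ Icc (0:ℝ) 1 := ⟨by linarith [hε.1], by linarith⟩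
          have hε'3 : ε' ≤ ε + δ/2 := min_le_right _ _
          have hstep : |ε - ε'| < δ := by
            rw [abs_lt]; constructor <;> linarith
          have hb' : |ε' - 1/2| ≤ n * (δ/2) := by
            rw [abs_of_nonpos (by linarith)]
            have h0 : (0:ℝ) ≤ (n:ℝ) * (δ/2) := by positivity
            have h1 : (1/2:ℝ) - n * (δ/2) ≤ 1/2 := by linarith
            have h2 : (1/2:ℝ) - n * (δ/2) ≤ ε + δ/2 := by linarith
            have h4 := le_min h1 h2
            rw [← hε'def] at h4
            linarith
          have hcc' := stepC ε' hε'01 ε hε hstep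
          rw [hcc']
          exact ih ε' hε'01 hb'
  have hc0 : ∀ ε ∈ Icc (0:ℝ) 1, h ε - h' ε = 0 := by
    intro ε hε
    obtain ⟨n, hn⟩ := exists_nat_ge (1/(δ/2))
    apply chain n ε hε
    have h1 : |ε - 1/2| ≤ 1 := by
      rw [abs_le]; constructor <;> linarith [hε.1, hε.2]
    have h2 : (1:ℝ) ≤ n * (δ/2) := by
      rw [div_le_iff₀ (by linarith : (0:ℝ) < δ/2)] at hn
      linarith
    linarith
  -- Step E : β = β'
  obtain ⟨ε₀, hε₀1, hε₀ne, hε₀X⟩ := hreach x₀ hx₀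
  have hhε₀ : h ε₀ ≠ 0 := by
    rcases lt_or_gt_of_ne hε₀ne with hlt | hlt
    · have := hhmono hε₀1 hhalf hlt
      rw [hh0] at this
      exact ne_of_lt this
    · have := hhmono hhalf hε₀1 hlt
      rw [hh0] at this
      exact ne_of_gt this
  have hce : h' ε₀ = h ε₀ := by have := hc0 ε₀ hε₀1; linarith
  have htX : x₀ + h' ε₀ ∈ X := by rw [hce]; exact hε₀X
  have hE := K1 ε₀ hε₀1 (x₀ + h' ε₀) (by simpa using hx₀)
  have hcε₀ : h ε₀ - h' ε₀ = 0 := hc0 ε₀ hε₀1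
  rw [hcε₀, add_zero] at hE
  have hE2 := K2 (x₀ + h' ε₀) htX
  have h3 : (β' - β) * h' ε₀ = 0 := by linear_combination hE - hE2
  have hββ' : β = β' := by
    rcases mul_eq_zero.mp h3 with hd | hd
    · linarith
    · exact absurd (hce ▸ hd) hhε₀
  refine ⟨hββ', ?_, ?_⟩
  · intro ε hε
    have := hc0 ε hε; linarith
  · intro x hx ε hε
    have H := heq x hx ε hε
    have hh'ε : h' ε = h ε := by have := hc0 ε hε; linarith
    rw [hh'ε, hββ'] at H
    linarith
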